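/- If w ∈ W̃_{2n+1} = ℤ^n ⋊ S*_{2n} is μ-permissible for the type-B root datum (μ = (1,0,...,0) ∈ ℤ^n as a cocharacter of O_{2n+1}), then its image under the Steinberg embedding W̃_{2n+1} ↪ W̃_{2n+2} (sending translations via (x_1,...,x_n) ↦ (x_1,...,x_n,0) and σ = (ε_1,...,ε_n)·τ to (ε_1,...,ε_n,η)·τ' with η = ±1 according as σ is even or odd) is μ-permissible in W̃_{2n+2} for the type-D root datum. -/
import Mathlib


noncomputable section

/-- The action of w = t_{v₀}σ with σ = (ε₁,...,ε_r)·τ ∈ {±1}^r ⋊ S_r on ℝ^r: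
x ↦ (i ↦ ε_i·x(τ⁻¹ i) + v₀(i)). -/
def wAct (r : ℕ) (v0 : Fin r → ℤ) (ε : Fin r → ℤ) (τ : Equiv.Perm (Fin r))
    (x : Fin r → ℝ) : Fin r → ℝ :=
  fun i => (ε i : ℝ) * x (τ⁻¹ i) + (v0 i : ℝ)

/-- Vertices of the base alcove of SO_{2n+1} (type B_n) in ℝ^n:
(0,...,0), (1,0^{(n-1)}) and ((1/2)^{(i)},0^{(n-i)}) for 2 ≤ i ≤ n. -/
def verticesB (n : ℕ) : Set (Fin n → ℝ) :=
  insert 0 (insert (fun i => if i.val = 0 then 1 else 0)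
    {v | ∃ m : ℕ, 2 ≤ m ∧ m ≤ n ∧ v = fun i => if i.val < m then 1 / 2 else 0})

/-- The base alcove of SO_{2n+1} in ℝ^n. -/
def alcoveB (n : ℕ) : Set (Fin n → ℝ) := interior (convexHull ℝ (verticesB n))

/-- Vertices of the base alcove of SO_{2n+2} (type D_{n+1}) in ℝ^{n+1}:
0, (1,0^{(n)}), ((1/2)^{(i)},0^{(n+1-i)}) for 2 ≤ i ≤ n-1, (1/2,...,1/2),
((1/2)^{(n)},-1/2). -/
def verticesD (n : ℕ) : Set (Fin (n + 1) → ℝ) :=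
  insert 0 (insert (fun i => if i.val = 0 then 1 else 0)
    (insert (fun _ => 1 / 2)
      (insert (fun i => if i.val = n then -(1 / 2) else 1 / 2)
        {v | ∃ m : ℕ, 2 ≤ m ∧ m ≤ n - 1 ∧
          v = fun i => if i.val < m then 1 / 2 else 0})))

/-- The base alcove of SO_{2n+2} in ℝ^{n+1}. -/
def alcoveD (n : ℕ) : Set (Fin (n + 1) → ℝ) := interior (convexHull ℝ (verticesD n))

/-- Conv(Wμ) = {x : Σ|x_i| ≤ 1} (for μ = (1,0,...,0), in either type). -/
def convMu (r : ℕ) : Set (Fin r → ℝ) := {x | ∑ i, |x i| ≤ 1}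

/-- μ-permissibility in W̃_{2n+1} (type B_n) for μ = (1,0,...,0):
w ≡ t_μ mod W_{a,2n+1} = Q^∨ ⋊ S*_{2n} (i.e. v₀ - μ has even coordinate sum) and
wa - a ∈ Conv(S*_{2n}μ) for all a in the base alcove. -/
def PermB (n : ℕ) (v0 : Fin n → ℤ) (ε : Fin n → ℤ) (τ : Equiv.Perm (Fin n)) : Prop :=
  Even ((∑ i, v0 i) - 1) ∧
  ∀ a ∈ alcoveB n, (fun i => wAct n v0 ε τ a i - a i) ∈ convMu n

/-- μ-permissibility in W̃_{2n+2} (type D_{n+1}) for μ = (1,0,...,0):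
w ≡ t_μ mod W_{a,2n+2} = Q^∨ ⋊ S°_{2n+2} (i.e. σ = ε·τ is even, ∏ε = 1, and
v₀ - μ has even coordinate sum) and wa - a ∈ Conv(S°_{2n+2}μ) for all a in the
base alcove. -/
def PermD (n : ℕ) (v0 : Fin (n + 1) → ℤ) (ε : Fin (n + 1) → ℤ)
    (τ : Equiv.Perm (Fin (n + 1))) : Prop :=
  (∏ i, ε i) = 1 ∧
  Even ((∑ i, v0 i) - 1) ∧
  ∀ a ∈ alcoveD n, (fun i => wAct (n + 1) v0 ε τ a i - a i) ∈ convMu (n + 1)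

/-- the map a ↦ wa - a -/
def fgen (r : ℕ) (v0 ε : Fin r → ℤ) (τ : Equiv.Perm (Fin r)) (a : Fin r → ℝ) : Fin r → ℝ :=
  fun i => wAct r v0 ε τ a i - a i

lemma fgen_combo (r : ℕ) (v0 ε : Fin r → ℤ) (τ : Equiv.Perm (Fin r))
    (x y : Fin r → ℝ) (θ η : ℝ) (hsum : θ + η = 1) :
    fgen r v0 ε τ (θ • x + η • y) = θ • fgen r v0 ε τ x + η • fgen r v0 ε τ y := by
  funext i
  simp only [fgen, wAct, Pi.add_apply, Pi.smul_apply, smul_eq_mul]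
  linear_combination (-(v0 i : ℝ)) * hsum

lemma convMu_convex (r : ℕ) : Convex ℝ (convMu r) := by
  intro x hx y hy θ η hθ hη hsum
  simp only [convMu, Set.mem_setOf_eq] at *
  calc ∑ i, |(θ • x + η • y) i| ≤ ∑ i, (θ * |x i| + η * |y i|) := by
        apply Finset.sum_le_sum
        intro i _
        simp only [Pi.add_apply, Pi.smul_apply, smul_eq_mul]
        calc |θ * x i + η * y i| ≤ |θ * x i| + |η * y i| := abs_add_le _ _
          _ = θ * |x i| + η * |y i| := by
              rw [abs_mul, abs_mul, abs_of_nonneg hθ, abs_of_nonneg hη]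
    _ = θ * ∑ i, |x i| + η * ∑ i, |y i| := by
        rw [Finset.sum_add_distrib, Finset.mul_sum, Finset.mul_sum]
    _ ≤ θ * 1 + η * 1 := by
        apply add_le_add <;> apply mul_le_mul_of_nonneg_left <;> assumption
    _ = 1 := by linarith

lemma convMu_closed (r : ℕ) : IsClosed (convMu r) := by
  have : Continuous fun x : Fin r → ℝ => ∑ i, |x i| := by
    apply continuous_finset_sum
    intro i _
    exact (continuous_apply i).abs
  exact isClosed_le this continuous_const

lemma fgen_continuous (r : ℕ) (v0 ε : Fin r → ℤ) (τ : Equiv.Perm (Fin r)) :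
    Continuous (fgen r v0 ε τ) := by
  apply continuous_pi
  intro i
  simp only [fgen, wAct]
  exact ((continuous_const.mul (continuous_apply _)).add continuous_const).sub
    (continuous_apply i)

lemma T_convex (r : ℕ) (v0 ε : Fin r → ℤ) (τ : Equiv.Perm (Fin r)) :
    Convex ℝ {a : Fin r → ℝ | fgen r v0 ε τ a ∈ convMu r} := by
  intro x hx y hy θ η hθ hη hsum
  simp only [Set.mem_setOf_eq] at *
  rw [fgen_combo r v0 ε τ x y θ η hsum]
  exact convMu_convex r hx hy hθ hη hsum

lemma T_closed (r : ℕ) (v0 ε : Fin r → ℤ) (τ : Equiv.Perm (Fin r)) :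
    IsClosed {a : Fin r → ℝ | fgen r v0 ε τ a ∈ convMu r} :=
  IsClosed.preimage (fgen_continuous r v0 ε τ) (convMu_closed r)

lemma verticesB_span (n : ℕ) (hn : 2 ≤ n) : affineSpan ℝ (verticesB n) = ⊤ := by
  have h0 : (0 : Fin n → ℝ) ∈ verticesB n := Set.mem_insert _ _
  have hspan : Submodule.span ℝ (verticesB n) = ⊤ := by
    have hE : ∀ k, k ≤ n →
        (fun i : Fin n => if (i : ℕ) < k then (1 : ℝ) else 0) ∈
          Submodule.span ℝ (verticesB n) := by
      intro k hk
      match k with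
      | 0 =>
        have : (fun i : Fin n => if (i : ℕ) < 0 then (1 : ℝ) else 0) = 0 := by
          funext i; simp
        rw [this]; exact Submodule.zero_mem _
      | 1 =>
        have : (fun i : Fin n => if (i : ℕ) < 1 then (1 : ℝ) else 0)
            = (fun i : Fin n => if (i : ℕ) = 0 then (1 : ℝ) else 0) := by
          funext i; simp [Nat.lt_one_iff]
        rw [this]
        exact Submodule.subset_span (Set.mem_insert_iff.mpr (Or.inr (Set.mem_insert _ _)))
      | (k + 2) =>
        have hv : (fun i : Fin n => if (i : ℕ) < k + 2 then (1 / 2 : ℝ) else 0)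
            ∈ verticesB n := by
          refine Set.mem_insert_iff.mpr (Or.inr (Set.mem_insert_iff.mpr (Or.inr ?_)))
          exact ⟨k + 2, by omega, hk, rfl⟩
        have := Submodule.smul_mem (Submodule.span ℝ (verticesB n)) (2 : ℝ)
          (Submodule.subset_span hv)
        convert this using 1
        funext i
        simp only [Pi.smul_apply, smul_eq_mul]
        split <;> norm_num
    have hsingle : ∀ j : Fin n,
        (fun i : Fin n => if i = j then (1 : ℝ) else 0) ∈ Submodule.span ℝ (verticesB n) := by
      intro j
      have h1 := hE (j + 1) (by omega)
      have h2 := hE j (by omega)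
      have := Submodule.sub_mem _ h1 h2
      convert this using 1
      funext i
      simp only [Pi.sub_apply]
      rcases eq_or_ne i j with rfl | hij
      · simp
      · have : (i : ℕ) ≠ (j : ℕ) := fun h => hij (Fin.ext h)
        split_ifs <;> simp_all <;> omega
    rw [eq_top_iff]
    intro x _
    have hx : x = ∑ j : Fin n, x j • (fun i : Fin n => if i = j then (1 : ℝ) else 0) := by
      funext i
      rw [Finset.sum_apply]
      simp only [Pi.smul_apply, smul_eq_mul, mul_ite, mul_one, mul_zero]
      rw [Finset.sum_ite_eq (Finset.univ) i x]
      simp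
    rw [hx]
    exact Submodule.sum_mem _ fun j _ => Submodule.smul_mem _ _ (hsingle j)
  rw [eq_top_iff]
  intro x _
  have : x ∈ Submodule.span ℝ (verticesB n) := hspan ▸ Submodule.mem_top
  -- x = x - 0 etc: use that affineSpan contains 0 and all directions
  have hmem : ∀ y ∈ Submodule.span ℝ (verticesB n), y ∈ affineSpan ℝ (verticesB n) := by
    intro y hy
    induction hy using Submodule.span_induction with
    | mem z hz => exact subset_affineSpan ℝ _ hz
    | zero => exact subset_affineSpan ℝ _ h0
    | add a b _ _ ha hb =>
      have := AffineSubspace.smul_vsub_vadd_mem (affineSpan ℝ (verticesB n)) (1 : ℝ)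
        ha (subset_affineSpan ℝ _ h0) hb
      simpa using this
    | smul c a _ ha =>
      have := AffineSubspace.smul_vsub_vadd_mem (affineSpan ℝ (verticesB n)) c
        ha (subset_affineSpan ℝ _ h0) (subset_affineSpan ℝ _ h0)
      simpa using this
  exact hmem x this

lemma lemA (n : ℕ) (hn : 2 ≤ n) (v0 ε : Fin n → ℤ) (τ : Equiv.Perm (Fin n))
    (hp : ∀ a ∈ alcoveB n, fgen n v0 ε τ a ∈ convMu n) :
    ∀ a ∈ convexHull ℝ (verticesB n), fgen n v0 ε τ a ∈ convMu n := by
  intro x hx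
  have hint : (interior (convexHull ℝ (verticesB n))).Nonempty :=
    interior_convexHull_nonempty_iff_affineSpan_eq_top.mpr (verticesB_span n hn)
  obtain ⟨y, hy⟩ := hint
  have hseg : openSegment ℝ x y ⊆ {a : Fin n → ℝ | fgen n v0 ε τ a ∈ convMu n} := by
    intro z hz
    exact hp z ((convex_convexHull ℝ (verticesB n)).openSegment_self_interior_subset_interior
      hx hy hz)
  have hxc : x ∈ closure (openSegment ℝ x y) :=
    segment_subset_closure_openSegment (left_mem_segment ℝ x y)
  exact (T_closed n v0 ε τ).closure_subset (closure_mono hseg hxc)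

lemma keyzero (n : ℕ) (v0 ε : Fin n → ℤ) (hε : ∀ i, ε i = 1 ∨ ε i = -1)
    (hprod : (∏ i, ε i) = -1) (hpar : Even ((∑ i, v0 i) - 1))
    (hle : ∑ i, |(ε i : ℝ) * (1 / 2) + (v0 i : ℝ) - 1 / 2| ≤ 1) :
    ∀ i, (ε i : ℝ) * (1 / 2) + (v0 i : ℝ) - 1 / 2 = 0 := by
  set b : Fin n → ℤ := fun i => v0 i + (if ε i = 1 then 0 else -1) with hb
  have hbr : ∀ i, (ε i : ℝ) * (1 / 2) + (v0 i : ℝ) - 1 / 2 = (b i : ℝ) := by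
    intro i
    rcases hε i with h | h <;> simp [hb, h] <;> push_cast <;> ring
  have hble : (∑ i, |b i|) ≤ 1 := by
    have : ((∑ i, |b i| : ℤ) : ℝ) ≤ 1 := by
      push_cast
      calc (∑ i, |(b i : ℝ)|) = ∑ i, |(ε i : ℝ) * (1 / 2) + (v0 i : ℝ) - 1 / 2| := by
            apply Finset.sum_congr rfl; intro i _; rw [hbr i]
        _ ≤ 1 := hle
    exact_mod_cast this
  -- parity of k = number of -1's
  have hk : (∏ i, ε i) = (-1 : ℤ) ^ (∑ i, if ε i = 1 then 0 else 1) := by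
    rw [← Finset.prod_pow_eq_pow_sum]
    apply Finset.prod_congr rfl
    intro i _
    rcases hε i with h | h <;> simp [h]
  have hkodd : Odd (∑ i, if ε i = 1 then 0 else 1) := by
    rcases Nat.even_or_odd (∑ i, if ε i = 1 then 0 else 1) with h | h
    · exfalso; rw [hk, h.neg_one_pow] at hprod; norm_num at hprod
    · exact h
  have hsumb : ∑ i, b i = (∑ i, v0 i) - (∑ i, (if ε i = 1 then 0 else 1) : ℕ) := by
    simp only [hb, Finset.sum_add_distrib]
    push_cast
    rw [sub_eq_add_neg, ← Finset.sum_neg_distrib]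
    congr 1
    apply Finset.sum_congr rfl
    intro i _
    split <;> simp
  have hsumb_even : Even (∑ i, b i) := by
    rw [hsumb]
    obtain ⟨c, hc⟩ := hpar
    obtain ⟨d, hd⟩ := hkodd
    refine ⟨(∑ i, v0 i - 1) / 2 - d, ?_⟩
    omega
  have habs_even : Even (∑ i, |b i|) := by
    have hdiff : Even (∑ i, (|b i| - b i)) := by
      apply Finset.sum_induction _ Even (fun a b => Even.add) Even.zero
      intro i _
      rcases abs_choice (b i) with h | h
      · rw [h]; simp
      · rw [h]; exact ⟨-b i, by ring⟩
    have : (∑ i, |b i|) = (∑ i, b i) + ∑ i, (|b i| - b i) := by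
      rw [← Finset.sum_add_distrib]; apply Finset.sum_congr rfl; intros; ring
    rw [this]
    exact hsumb_even.add hdiff
  have hzero : (∑ i, |b i|) = 0 := by
    have hnn : 0 ≤ ∑ i, |b i| := Finset.sum_nonneg fun i _ => abs_nonneg _
    obtain ⟨c, hc⟩ := habs_even
    omega
  intro i
  rw [hbr i]
  have : |b i| = 0 := by
    have := (Finset.sum_eq_zero_iff_of_nonneg
      (fun j _ => abs_nonneg (b j))).mp hzero i (Finset.mem_univ i)
    exact this
  simp [abs_eq_zero.mp this]

lemma tau'_inv_castSucc (n : ℕ) (τ : Equiv.Perm (Fin n)) (i : Fin n) :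
    ((Equiv.permCongr finSumFinEquiv) (Equiv.sumCongr τ (Equiv.refl (Fin 1))))⁻¹
      (Fin.castSucc i) = Fin.castSucc (τ⁻¹ i) := by
  rw [Equiv.Perm.inv_eq_iff_eq]
  simp [Fin.castSucc]

lemma tau'_inv_last (n : ℕ) (τ : Equiv.Perm (Fin n)) :
    ((Equiv.permCongr finSumFinEquiv) (Equiv.sumCongr τ (Equiv.refl (Fin 1))))⁻¹
      (Fin.last n) = Fin.last n := by
  rw [Equiv.Perm.inv_eq_iff_eq]
  simp [finSumFinEquiv_symm_last]
  ext; simp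

lemma sum_split (n : ℕ) (v0 ε : Fin n → ℤ) (τ : Equiv.Perm (Fin n)) (η : ℤ)
    (a : Fin n → ℝ) (c : ℝ) :
    ∑ i : Fin (n + 1),
        |fgen (n + 1) (Fin.snoc v0 0) (Fin.snoc ε η)
          ((Equiv.permCongr finSumFinEquiv) (Equiv.sumCongr τ (Equiv.refl (Fin 1))))
          (Fin.snoc a c) i|
      = (∑ i, |fgen n v0 ε τ a i|) + |(η : ℝ) * c - c| := by
  rw [Fin.sum_univ_castSucc]
  congr 1
  · apply Finset.sum_congr rfl
    intro i _
    congr 1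
    simp only [fgen, wAct, tau'_inv_castSucc, Fin.snoc_castSucc]
  · congr 1
    simp only [fgen, wAct, tau'_inv_last, Fin.snoc_last]
    push_cast
    ring

/-- if w = t_{v₀}σ ∈ W̃_{2n+1}, σ = (ε₁,...,ε_n)·τ, is μ-permissible
(type B_n), then its image under the Steinberg embedding W̃_{2n+1} ↪ W̃_{2n+2} —
translations via (x₁,...,x_n) ↦ (x₁,...,x_n,0), and σ ↦ (ε₁,...,ε_n,η)·τ' with
τ' fixing n+1 and η = ±1 according as σ is even or odd (σ is even in S_{2n} iff
∏ε = 1) — is μ-permissible in W̃_{2n+2} (type D_{n+1}). -/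
theorem stmt19 (n : ℕ) (hn : 2 ≤ n)
    (v0 : Fin n → ℤ) (ε : Fin n → ℤ) (hε : ∀ i, ε i = 1 ∨ ε i = -1)
    (τ : Equiv.Perm (Fin n))
    (hperm : PermB n v0 ε τ) :
    PermD n (Fin.snoc v0 0)
      (Fin.snoc ε (if (∏ i, ε i) = 1 then 1 else -1))
      ((Equiv.permCongr finSumFinEquiv)
        (Equiv.sumCongr τ (Equiv.refl (Fin 1)))) := by
  obtain ⟨hpar, hp⟩ := hperm
  have hp' : ∀ a ∈ alcoveB n, fgen n v0 ε τ a ∈ convMu n := hp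
  have hprod2 : (∏ i, ε i) = 1 ∨ (∏ i, ε i) = -1 := by
    rw [← mul_self_eq_one_iff, ← Finset.prod_mul_distrib]
    rw [Finset.prod_eq_one]
    intro i _
    rcases hε i with h | h <;> simp [h]
  have hA := lemA n hn v0 ε τ hp'
  set η : ℤ := if (∏ i, ε i) = 1 then 1 else -1 with hη
  refine ⟨?_, ?_, ?_⟩
  · rw [Fin.prod_univ_castSucc]
    simp only [Fin.snoc_castSucc, Fin.snoc_last]
    rcases hprod2 with h | h
    · simp [hη, h]
    · rw [hη, h]; norm_num
  · rw [Fin.sum_univ_castSucc]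
    simp only [Fin.snoc_castSucc, Fin.snoc_last]
    simpa using hpar
  · intro a ha
    have hsub : convexHull ℝ (verticesD n) ⊆
        {x : Fin (n + 1) → ℝ | fgen (n + 1) (Fin.snoc v0 0) (Fin.snoc ε η)
          ((Equiv.permCongr finSumFinEquiv) (Equiv.sumCongr τ (Equiv.refl (Fin 1)))) x
            ∈ convMu (n + 1)} := by
      apply convexHull_min ?_ (T_convex _ _ _ _)
      intro v hv
      simp only [verticesD, Set.mem_insert_iff, Set.mem_setOf_eq] at hv
      have hmemB : ∀ b ∈ verticesB n, ∑ i, |fgen n v0 ε τ b i| ≤ 1 := by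
        intro b hb
        exact hA b (subset_convexHull ℝ _ hb)
      obtain rfl | rfl | rfl | rfl | ⟨m, hm2, hmn, rfl⟩ := hv
      · -- zero vertex
        show fgen _ _ _ _ _ ∈ convMu (n + 1)
        have h00 : (0 : Fin (n + 1) → ℝ) = Fin.snoc (0 : Fin n → ℝ) 0 := by
          funext i
          refine Fin.lastCases ?_ ?_ i <;> simp
        simp only [convMu, Set.mem_setOf_eq]
        rw [h00, sum_split]
        have := hmemB 0 (Set.mem_insert _ _)
        simp only [mul_zero, sub_zero, abs_zero, add_zero]
        exact this
      · -- e1 vertex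
        show fgen _ _ _ _ _ ∈ convMu (n + 1)
        have he : (fun i : Fin (n + 1) => if (i : ℕ) = 0 then (1 : ℝ) else 0)
            = Fin.snoc (fun i : Fin n => if (i : ℕ) = 0 then (1 : ℝ) else 0) 0 := by
          funext i
          refine Fin.lastCases ?_ ?_ i
          · simp only [Fin.snoc_last, Fin.val_last]
            rw [if_neg (by omega)]
          · intro j
            simp [Fin.snoc_castSucc]
        simp only [convMu, Set.mem_setOf_eq]
        rw [he, sum_split]
        have := hmemB _ (Set.mem_insert_iff.mpr (Or.inr (Set.mem_insert _ _)))
        simp only [mul_zero, sub_zero, abs_zero, add_zero]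
        exact this
      · -- (1/2,...,1/2) vertex
        show fgen _ _ _ _ _ ∈ convMu (n + 1)
        have he : (fun _ : Fin (n + 1) => (1 / 2 : ℝ))
            = Fin.snoc (fun _ : Fin n => (1 / 2 : ℝ)) (1 / 2) := by
          funext i
          refine Fin.lastCases ?_ ?_ i <;> simp
        have hvB : (fun _ : Fin n => (1 / 2 : ℝ)) ∈ verticesB n := by
          refine Set.mem_insert_iff.mpr (Or.inr (Set.mem_insert_iff.mpr (Or.inr ?_)))
          exact ⟨n, hn, le_refl n, by funext i; simp [i.isLt]⟩
        simp only [convMu, Set.mem_setOf_eq]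
        rw [he, sum_split]
        rcases hprod2 with h | h
        · rw [hη, if_pos h]
          simp only [Int.cast_one, one_mul, sub_self, abs_zero, add_zero]
          exact hmemB _ hvB
        · rw [hη, if_neg (by rw [h]; norm_num)]
          have hz := keyzero n v0 ε hε h hpar (by
            have := hmemB _ hvB
            calc ∑ i, |(ε i : ℝ) * (1 / 2) + (v0 i : ℝ) - 1 / 2|
                = ∑ i, |fgen n v0 ε τ (fun _ => (1 / 2 : ℝ)) i| := rfl
              _ ≤ 1 := this)
          have hzsum : ∑ i, |fgen n v0 ε τ (fun _ => (1 / 2 : ℝ)) i| = 0 := by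
            apply Finset.sum_eq_zero
            intro i _
            rw [show fgen n v0 ε τ (fun _ => (1 / 2 : ℝ)) i
              = (ε i : ℝ) * (1 / 2) + (v0 i : ℝ) - 1 / 2 from rfl, hz i, abs_zero]
          rw [hzsum]
          norm_num
      · -- ((1/2)^n, -1/2) vertex
        show fgen _ _ _ _ _ ∈ convMu (n + 1)
        have he : (fun i : Fin (n + 1) => if (i : ℕ) = n then -(1 / 2 : ℝ) else 1 / 2)
            = Fin.snoc (fun _ : Fin n => (1 / 2 : ℝ)) (-(1 / 2)) := by
          funext i
          refine Fin.lastCases ?_ ?_ i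
          · simp
          · intro j
            simp only [Fin.snoc_castSucc, Fin.coe_castSucc]
            rw [if_neg (by have := j.isLt; omega)]
        have hvB : (fun _ : Fin n => (1 / 2 : ℝ)) ∈ verticesB n := by
          refine Set.mem_insert_iff.mpr (Or.inr (Set.mem_insert_iff.mpr (Or.inr ?_)))
          exact ⟨n, hn, le_refl n, by funext i; simp [i.isLt]⟩
        simp only [convMu, Set.mem_setOf_eq]
        rw [he, sum_split]
        rcases hprod2 with h | h
        · rw [hη, if_pos h]
          simp only [Int.cast_one, one_mul, sub_self, abs_zero, add_zero]
          exact hmemB _ hvB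
        · rw [hη, if_neg (by rw [h]; norm_num)]
          have hz := keyzero n v0 ε hε h hpar (by
            have := hmemB _ hvB
            calc ∑ i, |(ε i : ℝ) * (1 / 2) + (v0 i : ℝ) - 1 / 2|
                = ∑ i, |fgen n v0 ε τ (fun _ => (1 / 2 : ℝ)) i| := rfl
              _ ≤ 1 := this)
          have hzsum : ∑ i, |fgen n v0 ε τ (fun _ => (1 / 2 : ℝ)) i| = 0 := by
            apply Finset.sum_eq_zero
            intro i _
            rw [show fgen n v0 ε τ (fun _ => (1 / 2 : ℝ)) i
              = (ε i : ℝ) * (1 / 2) + (v0 i : ℝ) - 1 / 2 from rfl, hz i, abs_zero]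
          rw [hzsum]
          norm_num
      · -- intermediate vertices
        show fgen _ _ _ _ _ ∈ convMu (n + 1)
        have he : (fun i : Fin (n + 1) => if (i : ℕ) < m then (1 / 2 : ℝ) else 0)
            = Fin.snoc (fun i : Fin n => if (i : ℕ) < m then (1 / 2 : ℝ) else 0) 0 := by
          funext i
          refine Fin.lastCases ?_ ?_ i
          · simp only [Fin.snoc_last, Fin.val_last]
            rw [if_neg (by omega)]
          · intro j
            simp [Fin.snoc_castSucc]
        have hvB : (fun i : Fin n => if (i : ℕ) < m then (1 / 2 : ℝ) else 0) ∈ verticesB n := by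
          refine Set.mem_insert_iff.mpr (Or.inr (Set.mem_insert_iff.mpr (Or.inr ?_)))
          exact ⟨m, hm2, by omega, rfl⟩
        simp only [convMu, Set.mem_setOf_eq]
        rw [he, sum_split]
        simp only [mul_zero, sub_zero, abs_zero, add_zero]
        exact hmemB _ hvB
    exact hsub (interior_subset ha)
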